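/- If V_1,...,V_{n+1} are exchangeable random variables whose values are almost surely distinct, then for any β ∈ (0,1), P(V_{n+1} ≤ Quantile(β; empirical distribution of V_1,...,V_{n+1})) = ⌈β(n+1)⌉/(n+1). -/

import Mathlib

open MeasureTheory Set
open scoped ENNReal

/-- Level-β quantile of a measure on the extended reals. -/
noncomputable def quantileE (β : ℝ) (F : Measure EReal) : EReal :=
  sInf {z : EReal | ENNReal.ofReal β ≤ F (Set.Iic z)}

/-- Weighted discrete measure on the extended reals, with weights `p` on atoms `v`. -/
noncomputable def wEmp {m : ℕ} (p : Fin m → ℝ) (v : Fin m → EReal) : Measure EReal :=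
  ∑ i, ENNReal.ofReal (p i) • Measure.dirac (v i)

/-- Empirical (uniform) measure on the atoms `v`. -/
noncomputable def empE {m : ℕ} (v : Fin m → EReal) : Measure EReal :=
  wEmp (fun _ => 1 / m) v

lemma empE_Iic {m : ℕ} (v : Fin m → EReal) (z : EReal) :
    empE v (Set.Iic z)
      = ENNReal.ofReal (1 / m) * (Finset.univ.filter (fun i => v i ≤ z)).card := by
  unfold empE wEmp
  rw [Measure.coe_finset_sum, Finset.sum_apply]
  simp only [Measure.smul_apply, smul_eq_mul, Measure.dirac_apply' _ measurableSet_Iic]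
  rw [← Finset.mul_sum]
  congr 1
  rw [Finset.card_filter]
  push_cast
  refine Finset.sum_congr rfl fun i _ => ?_
  by_cases h : v i ≤ z
  · simp [h, Set.indicator_of_mem, Set.mem_Iic.mpr h]
  · simp [h, Set.indicator_of_notMem, Set.mem_Iic]

lemma mem_S {n : ℕ} {β : ℝ} (v : Fin (n+1) → ℝ) (z : EReal) :
    (ENNReal.ofReal β ≤ empE (fun i => ((v i : ℝ) : EReal)) (Set.Iic z))
      ↔ ⌈β * (n+1)⌉₊ ≤ (Finset.univ.filter (fun i => ((v i : ℝ) : EReal) ≤ z)).card := by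
  rw [empE_Iic]
  set c := (Finset.univ.filter (fun i => ((v i : ℝ) : EReal) ≤ z)).card with hc
  have h1 : (ENNReal.ofReal (1 / ((n+1:ℕ):ℝ)) * (c:ENNReal))
      = ENNReal.ofReal ((c:ℝ) / (n+1:ℕ)) := by
    rw [← ENNReal.ofReal_natCast c, ← ENNReal.ofReal_mul (by positivity)]
    ring_nf
  push_cast at h1 ⊢
  rw [h1, ENNReal.ofReal_le_ofReal_iff (by positivity)]
  rw [le_div_iff₀ (by positivity : (0:ℝ) < (n:ℝ)+1)]
  exact (Nat.ceil_le).symm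

lemma key_iff {n : ℕ} {β : ℝ} (hβ : β ∈ Set.Ioo (0:ℝ) 1) (v : Fin (n+1) → ℝ)
    (hv : Function.Injective v) (x : Fin (n+1)) :
    ((v x : ℝ) : EReal) ≤ quantileE β (empE (fun i => ((v i : ℝ) : EReal)))
      ↔ (Finset.univ.filter (fun i => v i ≤ v x)).card ≤ ⌈β * (n+1)⌉₊ := by
  obtain ⟨hβ0, hβ1⟩ := hβ
  set k := ⌈β * (n+1)⌉₊ with hk
  have hk1 : 1 ≤ k := Nat.one_le_iff_ne_zero.mpr (by
    simp only [hk, ne_eq, Nat.ceil_eq_zero, not_le]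
    positivity)
  unfold quantileE
  constructor
  · intro h
    by_contra hcx
    push_neg at hcx
    set T := Finset.univ.filter (fun i => v i < v x) with hT
    have hxT : x ∉ T := by simp [hT]
    have hins : Finset.univ.filter (fun i => v i ≤ v x) = insert x T := by
      ext i
      simp only [hT, Finset.mem_filter, Finset.mem_univ, true_and, Finset.mem_insert]
      constructor
      · intro hi
        rcases eq_or_lt_of_le hi with h' | h'
        · exact Or.inl (hv h')
        · exact Or.inr h'
      · rintro (rfl | hi) <;> [exact le_refl _; exact le_of_lt hi]
    have hcard : (Finset.univ.filter (fun i => v i ≤ v x)).card = T.card + 1 := by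
      rw [hins, Finset.card_insert_of_notMem hxT]
    have hkT : k ≤ T.card := by omega
    have hTne : T.Nonempty := Finset.card_pos.mp (by omega)
    obtain ⟨i0, hi0T, hi0max⟩ := Finset.exists_max_image T v hTne
    have hzS : ENNReal.ofReal β
        ≤ empE (fun i => ((v i : ℝ) : EReal)) (Set.Iic ((v i0 : ℝ) : EReal)) := by
      rw [mem_S]
      refine le_trans hkT (Finset.card_le_card ?_)
      intro i hi
      simp only [Finset.mem_filter, Finset.mem_univ, true_and]
      exact EReal.coe_le_coe_iff.mpr (hi0max i hi)
    have hle : sInf {z : EReal |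
          ENNReal.ofReal β ≤ empE (fun i => ((v i : ℝ) : EReal)) (Set.Iic z)}
        ≤ ((v i0 : ℝ) : EReal) := sInf_le hzS
    have h2 : ((v x : ℝ) : EReal) ≤ ((v i0 : ℝ) : EReal) := le_trans h hle
    have h3 : v x ≤ v i0 := EReal.coe_le_coe_iff.mp h2
    have h4 : v i0 < v x := by simpa [hT] using hi0T
    linarith
  · intro hcx
    refine le_sInf fun z hz => ?_
    rw [Set.mem_setOf_eq, mem_S] at hz
    by_contra hzx
    push_neg at hzx
    have hsub : (Finset.univ.filter (fun i => ((v i : ℝ) : EReal) ≤ z))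
        ⊂ (Finset.univ.filter (fun i => v i ≤ v x)) := by
      constructor
      · intro i hi
        simp only [Finset.mem_filter, Finset.mem_univ, true_and] at hi ⊢
        exact EReal.coe_le_coe_iff.mp (le_of_lt (lt_of_le_of_lt hi hzx))
      · intro hcontra
        have hx : x ∈ Finset.univ.filter (fun i => v i ≤ v x) := by simp
        have := hcontra hx
        simp only [Finset.mem_filter, Finset.mem_univ, true_and] at this
        exact absurd this (not_le_of_gt hzx)
    have := Finset.card_lt_card hsub
    omega

lemma count_ranks {n : ℕ} (v : Fin (n+1) → ℝ) (hv : Function.Injective v)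
    {k : ℕ} (hk : k ≤ n + 1) :
    (Finset.univ.filter
        (fun j => (Finset.univ.filter (fun i => v i ≤ v j)).card ≤ k)).card = k := by
  set g : Fin (n+1) → ℕ := fun j => (Finset.univ.filter (fun i => v i ≤ v j)).card with hg
  have hmono : ∀ a b, v a < v b → g a < g b := by
    intro a b hab
    apply Finset.card_lt_card
    constructor
    · intro i hi
      simp only [Finset.mem_filter, Finset.mem_univ, true_and] at hi ⊢
      linarith
    · intro hcon
      have hb : b ∈ Finset.univ.filter (fun i => v i ≤ v b) := by simp
      have := hcon hb
      simp only [Finset.mem_filter, Finset.mem_univ, true_and] at this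
      linarith
  have hginj : Function.Injective g := by
    intro a b hab
    rcases lt_trichotomy (v a) (v b) with h | h | h
    · exact absurd hab (Nat.ne_of_lt (hmono a b h))
    · exact hv h
    · exact absurd hab.symm (Nat.ne_of_lt (hmono b a h))
  have hrange : ∀ j, g j ∈ Finset.Icc 1 (n+1) := by
    intro j
    simp only [Finset.mem_Icc]
    constructor
    · have : j ∈ Finset.univ.filter (fun i => v i ≤ v j) := by simp
      exact Finset.card_pos.mpr ⟨j, this⟩
    · simpa [hg] using Finset.card_filter_le Finset.univ (fun i => v i ≤ v j)
  have himg : Finset.univ.image g = Finset.Icc 1 (n+1) := by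
    apply Finset.eq_of_subset_of_card_le
    · intro c hc
      obtain ⟨j, _, rfl⟩ := Finset.mem_image.mp hc
      exact hrange j
    · rw [Finset.card_image_of_injective _ hginj]
      simp
  calc (Finset.univ.filter (fun j => g j ≤ k)).card
      = ((Finset.univ.filter (fun j => g j ≤ k)).image g).card :=
        (Finset.card_image_of_injective _ hginj).symm
    _ = ((Finset.univ.image g).filter (fun c => c ≤ k)).card := by
        rw [Finset.filter_image]
    _ = ((Finset.Icc 1 (n+1)).filter (fun c => c ≤ k)).card := by rw [himg]
    _ = (Finset.Icc 1 k).card := by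
        congr 1
        ext c
        simp only [Finset.mem_filter, Finset.mem_Icc]
        omega
    _ = k := by simp

lemma measSet {n k : ℕ} (j : Fin (n+1)) :
    MeasurableSet {v : Fin (n+1) → ℝ |
      (Finset.univ.filter (fun i => v i ≤ v j)).card ≤ k} := by
  have hg : Measurable (fun v : Fin (n+1) → ℝ =>
      (Finset.univ.filter (fun i => v i ≤ v j)).card) := by
    simp only [Finset.card_filter]
    apply Finset.measurable_sum
    intro i _
    exact Measurable.ite (measurableSet_le (measurable_pi_apply i) (measurable_pi_apply j))
      measurable_const measurable_const
  exact hg measurableSet_Iic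

lemma card_reindex {m : ℕ} (σ : Equiv.Perm (Fin m)) (p : Fin m → Prop) [DecidablePred p] :
    (Finset.univ.filter (fun i => p (σ i))).card = (Finset.univ.filter p).card := by
  apply Finset.card_bij' (fun i _ => σ i) (fun i _ => σ.symm i) <;> simp

theorem stmt5 {Ω : Type*} [MeasurableSpace Ω] (P : Measure Ω) [IsProbabilityMeasure P]
    (n : ℕ) (V : Fin (n + 1) → Ω → ℝ) (hmeas : ∀ i, Measurable (V i))
    (hexch : ∀ σ : Equiv.Perm (Fin (n + 1)),
      Measure.map (fun ω i => V (σ i) ω) P = Measure.map (fun ω i => V i ω) P)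
    (hties : P {ω | ∃ i j, i ≠ j ∧ V i ω = V j ω} = 0)
    (β : ℝ) (hβ : β ∈ Set.Ioo (0 : ℝ) 1) :
    P {ω | (V (Fin.last n) ω : EReal) ≤
        quantileE β (empE (fun i => ((V i ω : ℝ) : EReal)))}
      = ENNReal.ofReal ((⌈β * (n + 1)⌉₊ : ℝ) / (n + 1)) := by
  classical
  set k := ⌈β * (n + 1)⌉₊ with hkdef
  have hkn : k ≤ n + 1 := by
    rw [hkdef]
    apply Nat.ceil_le.mpr
    push_cast
    nlinarith [hβ.1, hβ.2]
  -- injectivity a.e.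
  have hinj : ∀ᵐ ω ∂P, Function.Injective (fun i => V i ω) := by
    have h := (MeasureTheory.measure_eq_zero_iff_ae_notMem (μ := P)).mp hties
    filter_upwards [h] with ω hω
    intro i j hij
    by_contra hne
    exact hω ⟨i, j, hne, hij⟩
  -- the rank events
  set E : Fin (n+1) → Set Ω := fun j =>
    {ω | (Finset.univ.filter (fun i => V i ω ≤ V j ω)).card ≤ k} with hEdef
  have hVvec : Measurable (fun ω i => V i ω) := measurable_pi_lambda _ hmeas
  have hE : ∀ j, MeasurableSet (E j) := by
    intro j
    have : E j = (fun ω i => V i ω) ⁻¹'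
        {v : Fin (n+1) → ℝ | (Finset.univ.filter (fun i => v i ≤ v j)).card ≤ k} := rfl
    rw [this]
    exact hVvec (measSet j)
  -- step 1: the event equals the rank event a.e.
  have step1 : P {ω | (V (Fin.last n) ω : EReal) ≤
        quantileE β (empE (fun i => ((V i ω : ℝ) : EReal)))} = P (E (Fin.last n)) := by
    apply measure_congr
    filter_upwards [hinj] with ω hω
    have := key_iff hβ (fun i => V i ω) hω (Fin.last n)
    simp only [hEdef, Set.mem_setOf_eq, eq_iff_iff]
    exact this
  -- step 2: exchangeability gives equal probabilities
  have step2 : ∀ j, P (E j) = P (E (Fin.last n)) := by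
    intro j
    set σ := Equiv.swap j (Fin.last n) with hσ
    have hVvecσ : Measurable (fun ω i => V (σ i) ω) :=
      measurable_pi_lambda _ (fun i => hmeas _)
    set A : Set (Fin (n+1) → ℝ) :=
      {v | (Finset.univ.filter (fun i => v i ≤ v (Fin.last n))).card ≤ k} with hA
    have hAm : MeasurableSet A := measSet _
    have h1 : E j = (fun ω i => V (σ i) ω) ⁻¹' A := by
      ext ω
      simp only [hEdef, hA, Set.mem_preimage, Set.mem_setOf_eq, hσ, Equiv.swap_apply_right]
      rw [card_reindex (Equiv.swap j (Fin.last n)) (fun i => V i ω ≤ V j ω)]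
    have h2 : E (Fin.last n) = (fun ω i => V i ω) ⁻¹' A := rfl
    rw [h1, h2, ← Measure.map_apply hVvecσ hAm, ← Measure.map_apply hVvec hAm, hexch σ]
  -- step 3: sum of indicators is k a.e.
  have step3 : ∑ j, P (E j) = (k : ℝ≥0∞) := by
    have hae : ∀ᵐ ω ∂P,
        ∑ j, (E j).indicator (fun _ => (1:ℝ≥0∞)) ω = (k : ℝ≥0∞) := by
      filter_upwards [hinj] with ω hω
      have hcount := count_ranks (fun i => V i ω) hω hkn
      calc ∑ j, (E j).indicator (fun _ => (1:ℝ≥0∞)) ω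
          = ∑ j, if (Finset.univ.filter (fun i => V i ω ≤ V j ω)).card ≤ k
              then (1:ℝ≥0∞) else 0 := by
            refine Finset.sum_congr rfl fun j _ => ?_
            simp [hEdef, Set.indicator_apply, Set.mem_setOf_eq]
        _ = ((Finset.univ.filter (fun j =>
              (Finset.univ.filter (fun i => V i ω ≤ V j ω)).card ≤ k)).card : ℝ≥0∞) := by
            rw [Finset.sum_boole]
        _ = (k : ℝ≥0∞) := by rw [hcount]
    calc ∑ j, P (E j)
        = ∑ j, ∫⁻ ω, (E j).indicator (fun _ => (1:ℝ≥0∞)) ω ∂P := by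
          refine Finset.sum_congr rfl fun j _ => ?_
          rw [lintegral_indicator (hE j)]
          simp
      _ = ∫⁻ ω, ∑ j, (E j).indicator (fun _ => (1:ℝ≥0∞)) ω ∂P := by
          rw [lintegral_finset_sum]
          exact fun j _ => measurable_const.indicator (hE j)
      _ = ∫⁻ _, (k : ℝ≥0∞) ∂P := lintegral_congr_ae hae
      _ = (k : ℝ≥0∞) := by simp
  -- step 4: solve for P (E last)
  have htot : ((n+1:ℕ) : ℝ≥0∞) * P (E (Fin.last n)) = (k : ℝ≥0∞) := by
    rw [← step3]
    rw [Finset.sum_congr rfl (fun j _ => step2 j)]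
    simp [Finset.sum_const, Finset.card_univ, mul_comm]
  have hfin : P (E (Fin.last n)) = (k : ℝ≥0∞) / ((n+1:ℕ) : ℝ≥0∞) :=
    (ENNReal.eq_div_iff (by exact_mod_cast Nat.succ_ne_zero n)
      (ENNReal.natCast_ne_top _)).mpr htot
  rw [step1, hfin]
  rw [ENNReal.ofReal_div_of_pos (by positivity)]
  congr 1
  · exact (ENNReal.ofReal_natCast k).symm
  · rw [show ((n:ℝ)+1) = ((n+1:ℕ):ℝ) by push_cast; ring]
    exact (ENNReal.ofReal_natCast _).symm
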